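/- Let β and γ be real numbers with 0 < β < γ, let μ be a Borel probability measure on ℝ with μ([-β, β]) = 1, let F be the cumulative distribution function of μ, and define g(y) = (F(y+γ) - F(y-γ))/(2γ) for y ∈ ℝ. Then -∫_ℝ g(y) log₂ g(y) dy ≤ β/γ + log₂(2γ). -/

import Mathlib

open MeasureTheory


private lemma ent_le_one (a : ℝ) :
    -(a * Real.logb 2 a) - (1 - a) * Real.logb 2 (1 - a) ≤ 1 := by
  have h2 : (0:ℝ) < Real.log 2 := Real.log_pos one_lt_two
  have h := Real.binEntropy_le_log_two (p := a)
  simp only [Real.binEntropy, Real.log_inv] at h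
  have key : -(a * Real.log a) - (1 - a) * Real.log (1 - a) ≤ Real.log 2 := by linarith
  have e : -(a * Real.logb 2 a) - (1 - a) * Real.logb 2 (1 - a)
      = (-(a * Real.log a) - (1 - a) * Real.log (1 - a)) / Real.log 2 := by
    simp only [Real.logb]; ring
  rw [e, div_le_one h2]
  exact key

private lemma phi_div (c a : ℝ) (hc : 0 < c) (ha : 0 ≤ a) :
    (a / c) * Real.logb 2 (a / c) = (a * Real.logb 2 a - a * Real.logb 2 c) / c := by
  rcases ha.eq_or_lt with rfl | ha'
  · simp
  · rw [Real.logb_div (ne_of_gt ha') (ne_of_gt hc)]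
    ring

private lemma key_pt (γ a : ℝ) (hγ : 0 < γ) (ha : 0 ≤ a) (ha1 : a ≤ 1) :
    -((a / (2*γ)) * Real.logb 2 (a / (2*γ))
      + ((1 - a) / (2*γ)) * Real.logb 2 ((1 - a) / (2*γ)))
      ≤ (1 + Real.logb 2 (2*γ)) / (2*γ) := by
  have hc : (0:ℝ) < 2*γ := by linarith
  rw [phi_div _ _ hc ha, phi_div _ _ hc (by linarith)]
  have he := ent_le_one a
  rw [show -((a * Real.logb 2 a - a * Real.logb 2 (2*γ)) / (2*γ)
      + ((1-a) * Real.logb 2 (1-a) - (1-a) * Real.logb 2 (2*γ)) / (2*γ))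
    = (-(a * Real.logb 2 a) - (1-a) * Real.logb 2 (1-a) + Real.logb 2 (2*γ)) / (2*γ) by ring]
  gcongr


theorem entropy_of_smoothed_cdf_le (β γ : ℝ) (hβ : 0 < β) (hβγ : β < γ)
    (μ : Measure ℝ) [IsProbabilityMeasure μ] (hμ : μ (Set.Icc (-β) β) = 1)
    (F : ℝ → ℝ) (hF : ∀ x, F x = (μ (Set.Iic x)).toReal)
    (g : ℝ → ℝ) (hg : ∀ y, g y = (F (y + γ) - F (y - γ)) / (2 * γ)) :
    -∫ y, g y * Real.logb 2 (g y) ≤ β / γ + Real.logb 2 (2 * γ) := by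
  have hγ : 0 < γ := hβ.trans hβγ
  have hc : (0:ℝ) < 2 * γ := by linarith
  set f : ℝ → ℝ := fun y => g y * Real.logb 2 (g y) with hf
  -- basic facts on F
  have hF0 : ∀ x, 0 ≤ F x := fun x => by rw [hF]; positivity
  have hF1 : ∀ x, F x ≤ 1 := fun x => by
    rw [hF]
    simpa using ENNReal.toReal_mono (by simp) (prob_le_one (μ := μ) (s := Set.Iic x))
  have hFmono : Monotone F := fun x y hxy => by
    rw [hF, hF]
    exact ENNReal.toReal_mono (measure_ne_top μ _)
      (measure_mono (Set.Iic_subset_Iic.mpr hxy))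
  have hcompl : μ (Set.Icc (-β) β)ᶜ = 0 := by
    have h := measure_compl (measurableSet_Icc (a := -β) (b := β)) (measure_ne_top μ _)
    rw [hμ, measure_univ] at h
    simpa using h
  have hFlow : ∀ x, x < -β → F x = 0 := by
    intro x hx
    rw [hF]
    have h0 : μ (Set.Iic x) = 0 := by
      refine measure_mono_null (fun t ht => ?_) hcompl
      simp only [Set.mem_Iic] at ht
      simp only [Set.mem_compl_iff, Set.mem_Icc, not_and, not_le]
      intro h
      linarith
    simp [h0]
  have hFhigh : ∀ x, β ≤ x → F x = 1 := by
    intro x hx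
    rw [hF]
    have h1 : μ (Set.Iic x) = 1 := by
      refine le_antisymm prob_le_one ?_
      refine le_trans (le_of_eq hμ.symm) (measure_mono (fun t ht => ?_))
      simp only [Set.mem_Icc] at ht
      simp only [Set.mem_Iic]
      linarith
    simp [h1]
  -- basic facts on g
  have hg0 : ∀ y, 0 ≤ g y := fun y => by
    rw [hg]
    apply div_nonneg _ hc.le
    have := hFmono (show y - γ ≤ y + γ by linarith)
    linarith
  have hg1 : ∀ y, g y ≤ 1 / (2 * γ) := fun y => by
    rw [hg]
    gcongr
    have h1 := hF1 (y + γ)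
    have h2 := hF0 (y - γ)
    linarith
  -- measurability
  have hFm : Measurable F := hFmono.measurable
  have hgm : Measurable g := by
    have : g = fun y => (F (y + γ) - F (y - γ)) / (2 * γ) := funext hg
    rw [this]
    exact ((hFm.comp (measurable_id.add_const γ)).sub
      (hFm.comp (measurable_id.sub_const γ))).div_const _
  have hfeq : ∀ y, f y = g y * Real.log (g y) / Real.log 2 := by
    intro y
    simp only [hf, Real.logb]
    ring
  have hfm : Measurable f := by
    have : f = fun y => g y * Real.log (g y) / Real.log 2 := funext hfeq
    rw [this]
    exact ((Real.continuous_mul_log.measurable).comp hgm).div_const _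
  -- a uniform bound
  obtain ⟨C, hC⟩ : ∃ C, ∀ y, ‖f y‖ ≤ C := by
    obtain ⟨C, hC⟩ := (isCompact_Icc (a := (0:ℝ)) (b := 1 / (2*γ))).exists_bound_of_continuousOn
      ((Real.continuous_mul_log.div_const (Real.log 2)).continuousOn)
    refine ⟨C, fun y => ?_⟩
    have := hC (g y) ⟨hg0 y, hg1 y⟩
    rwa [hfeq y]
  -- interval integrability for bounded measurable functions
  have hii : ∀ (h : ℝ → ℝ), Measurable h → (∀ y, ‖h y‖ ≤ C) →
      ∀ a b : ℝ, IntervalIntegrable h volume a b := by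
    intro h hm hb a b
    rw [intervalIntegrable_iff]
    exact Measure.integrableOn_of_bounded measure_Ioc_lt_top.ne
      hm.aestronglyMeasurable (ae_of_all _ fun y => hb y)
  have hif : ∀ a b : ℝ, IntervalIntegrable f volume a b := hii f hfm hC
  have hifl : ∀ a b : ℝ, IntervalIntegrable (fun u => f (u - γ)) volume a b :=
    hii _ (hfm.comp (measurable_id.sub_const γ)) (fun y => hC _)
  have hifr : ∀ a b : ℝ, IntervalIntegrable (fun u => f (u + γ)) volume a b :=
    hii _ (hfm.comp (measurable_id.add_const γ)) (fun y => hC _)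
  -- f vanishes outside [-β-γ, γ+β]
  have hout : ∀ x ∉ Set.Icc (-β - γ) (γ + β), f x = 0 := by
    intro x hx
    rw [Set.mem_Icc, not_and_or, not_le, not_le] at hx
    have hgx : g x = 0 := by
      rw [hg]
      rcases hx with hx | hx
      · rw [hFlow _ (by linarith), hFlow _ (by linarith)]
        simp
      · rw [hFhigh _ (by linarith), hFhigh _ (by linarith)]
        simp
    simp [hf, hgx]
  -- reduce to the interval integral
  have h1 : ∫ y, f y = ∫ y in (-β - γ)..(γ + β), f y := by
    rw [intervalIntegral.integral_of_le (by linarith), ← integral_Icc_eq_integral_Ioc]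
    exact (setIntegral_eq_integral_of_forall_compl_eq_zero hout).symm
  -- split into three pieces
  have hsplit : ∫ y in (-β - γ)..(γ + β), f y
      = (∫ y in (-β - γ)..(β - γ), f y) + (∫ y in (β - γ)..(γ - β), f y)
        + (∫ y in (γ - β)..(γ + β), f y) := by
    rw [intervalIntegral.integral_add_adjacent_intervals (hif _ _) (hif _ _),
      intervalIntegral.integral_add_adjacent_intervals (hif _ _) (hif _ _)]
  -- middle piece
  have hmid : ∫ y in (β - γ)..(γ - β), f y
      = (2*γ - 2*β) * ((1 / (2*γ)) * Real.logb 2 (1 / (2*γ))) := by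
    rw [intervalIntegral.integral_of_le (by linarith), integral_Ioc_eq_integral_Ioo]
    rw [setIntegral_congr_fun measurableSet_Ioo
      (g := fun _ => (1 / (2*γ)) * Real.logb 2 (1 / (2*γ))) ?_]
    · rw [setIntegral_const, measureReal_def, Real.volume_Ioo, smul_eq_mul]
      rw [ENNReal.toReal_ofReal (by linarith)]
      ring
    · intro y hy
      simp only [Set.mem_Ioo] at hy
      have e1 : F (y + γ) = 1 := hFhigh _ (by linarith)
      have e2 : F (y - γ) = 0 := hFlow _ (by linarith)
      simp only [hf, hg, e1, e2, sub_zero]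
    -- edges via translation
  have hleft : ∫ y in (-β - γ)..(β - γ), f y = ∫ u in (-β)..β, f (u - γ) := by
    rw [intervalIntegral.integral_comp_sub_right f γ]
  have hright : ∫ y in (γ - β)..(γ + β), f y = ∫ u in (-β)..β, f (u + γ) := by
    rw [intervalIntegral.integral_comp_add_right f γ]
    rw [show -β + γ = γ - β by ring, show β + γ = γ + β by ring]
  -- pointwise bound on the edge sum
  have hedge : ∀ u ∈ Set.Icc (-β) β,
      -(f (u - γ) + f (u + γ)) ≤ (1 + Real.logb 2 (2*γ)) / (2*γ) := by
    intro u hu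
    rw [Set.mem_Icc] at hu
    have e1 : g (u - γ) = F u / (2*γ) := by
      rw [hg]
      rw [show u - γ + γ = u by ring, hFlow (u - γ - γ) (by linarith)]
      ring_nf
    have e2 : g (u + γ) = (1 - F u) / (2*γ) := by
      rw [hg]
      rw [show u + γ - γ = u by ring, hFhigh (u + γ + γ) (by linarith)]
    have := key_pt γ (F u) hγ (hF0 u) (hF1 u)
    simp only [hf, e1, e2]
    linarith
  -- integrate the bound
  have hmono : -((∫ u in (-β)..β, f (u - γ)) + ∫ u in (-β)..β, f (u + γ))
      ≤ (β - -β) * ((1 + Real.logb 2 (2*γ)) / (2*γ)) := by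
    rw [← intervalIntegral.integral_add (hifl _ _) (hifr _ _),
      ← intervalIntegral.integral_neg]
    calc (∫ u in (-β)..β, -(f (u - γ) + f (u + γ)))
        ≤ ∫ _ in (-β)..β, (1 + Real.logb 2 (2*γ)) / (2*γ) :=
          intervalIntegral.integral_mono_on (by linarith)
            (((hifl _ _).add (hifr _ _)).neg) intervalIntegrable_const hedge
      _ = (β - -β) * ((1 + Real.logb 2 (2*γ)) / (2*γ)) := by
          rw [intervalIntegral.integral_const, smul_eq_mul]
  -- put everything together
  rw [h1, hsplit, hleft, hright, hmid]
  have hLB : Real.logb 2 (1 / (2*γ)) = -Real.logb 2 (2*γ) := by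
    rw [one_div, Real.logb_inv]
  rw [hLB]
  have harith : (β - -β) * ((1 + Real.logb 2 (2*γ)) / (2*γ))
      - (2*γ - 2*β) * ((1 / (2*γ)) * -Real.logb 2 (2*γ))
      + (2*γ - 2*β) * ((1 / (2*γ)) * -Real.logb 2 (2*γ))
      = (β - -β) * ((1 + Real.logb 2 (2*γ)) / (2*γ)) := by ring
  have hfinal : (β - -β) * ((1 + Real.logb 2 (2*γ)) / (2*γ))
      - (2*γ - 2*β) * ((1 / (2*γ)) * -Real.logb 2 (2*γ))
      = β / γ + Real.logb 2 (2*γ) := by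
    field_simp
    ring
  linarith [hmono]
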